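/- Let n ≥ 1, let α > 1 be real, and let X and Y be n×n complex positive semidefinite matrices satisfying 0 ≤ X ≤ Y ≤ I in the Löwner order with ‖X‖₁ = p. Then ‖X Y^{α−1}‖₁ ≤ p · (Tr Y^α)^{(α−1)/α}. -/

import Mathlib

open Matrix
open scoped Kronecker ComplexOrder

noncomputable section

/-- Apply a real function to the spectrum of a Hermitian matrix via the spectral
(continuous functional) calculus; junk value `0` if the matrix is not Hermitian. -/
def matFun {n : Type*} [Fintype n] [DecidableEq n] (M : Matrix n n ℂ) (f : ℝ → ℝ) :
    Matrix n n ℂ :=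
  if hM : M.IsHermitian then
    (hM.eigenvectorUnitary : Matrix n n ℂ) *
      Matrix.diagonal (fun i => (f (hM.eigenvalues i) : ℂ)) *
        (star (hM.eigenvectorUnitary : Matrix n n ℂ))
  else 0

/-- Real (spectral) power of a matrix, with the convention `0 ^ β = 0` for `β ≠ 0`. -/
def matRpow {n : Type*} [Fintype n] [DecidableEq n] (M : Matrix n n ℂ) (β : ℝ) :
    Matrix n n ℂ :=
  matFun M (fun x => x ^ β)

/-- Trace norm (Schatten 1-norm): `‖M‖₁ = Tr √(Mᴴ M)`. -/
def traceNorm {n : Type*} [Fintype n] [DecidableEq n] (M : Matrix n n ℂ) : ℝ :=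
  (((Matrix.posSemidef_conjTranspose_mul_self M).isHermitian.eigenvectorUnitary : Matrix n n ℂ) *
      Matrix.diagonal (fun i => ((Real.sqrt
        ((Matrix.posSemidef_conjTranspose_mul_self M).isHermitian.eigenvalues i) : ℝ) : ℂ)) *
      (star ((Matrix.posSemidef_conjTranspose_mul_self M).isHermitian.eigenvectorUnitary :
        Matrix n n ℂ))).trace.re

/-- Operator norm of a matrix, acting on the Euclidean (ℓ²) space. -/
def opNorm {n : Type*} [Fintype n] [DecidableEq n] (M : Matrix n n ℂ) : ℝ :=
  ‖Matrix.toEuclideanCLM (𝕜 := ℂ) M‖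

/-- Partial trace over the second tensor factor. -/
def ptraceRight {ιA ιB : Type*} [Fintype ιB] (M : Matrix (ιA × ιB) (ιA × ιB) ℂ) :
    Matrix ιA ιA ℂ :=
  Matrix.of fun a a' => ∑ b : ιB, M (a, b) (a', b)

/-- Heisenberg time evolution `ρ(t) = e^{-iHt} ρ e^{iHt}`. -/
def timeEvol {n : Type*} [Fintype n] [DecidableEq n] (H ρ : Matrix n n ℂ) (t : ℝ) :
    Matrix n n ℂ :=
  NormedSpace.exp ((-(Complex.I * (t : ℂ))) • H) * ρ *
    NormedSpace.exp ((Complex.I * (t : ℂ)) • H)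

/-- Von Neumann entropy `S₁(σ) = -Tr(σ log σ)` (with the convention `0 log 0 = 0`). -/
def entVN {n : Type*} [Fintype n] [DecidableEq n] (σ : Matrix n n ℂ) : ℝ :=
  -((matFun σ (fun x => x * Real.log x)).trace.re)

/-- α-Renyi entropy `S_α(σ) = (1/(1-α)) log Tr σ^α`. -/
def renyiEnt {n : Type*} [Fintype n] [DecidableEq n] (α : ℝ) (σ : Matrix n n ℂ) : ℝ :=
  (1 - α)⁻¹ * Real.log ((matRpow σ α).trace.re)

end



section AuxStmt1
open Matrix
open scoped ComplexOrder
set_option maxHeartbeats 1000000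
set_option synthInstance.maxHeartbeats 1000000
set_option linter.unusedSectionVars false
section
variable {N : Type*} [Fintype N] [DecidableEq N]

private lemma dot_star_self_eq (v : N → ℂ) :
    star v ⬝ᵥ v = ((‖(WithLp.equiv 2 (N → ℂ)).symm v‖^2 : ℝ) : ℂ) := by
  rw [dotProduct_comm]
  have h := inner_self_eq_norm_sq_to_K (𝕜 := ℂ) ((WithLp.equiv 2 (N → ℂ)).symm v)
  push_cast
  exact h

private lemma toCLM_apply_symm (C : Matrix N N ℂ) (x : N → ℂ) :
    toEuclideanCLM (𝕜 := ℂ) C ((WithLp.equiv 2 (N → ℂ)).symm x) =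
      (WithLp.equiv 2 (N → ℂ)).symm (C *ᵥ x) := by
  rfl

private lemma psd_one_sub_iff (C : Matrix N N ℂ) :
    ((1 : Matrix N N ℂ) - Cᴴ * C).PosSemidef ↔
      ∀ u : EuclideanSpace ℂ N, ‖toEuclideanCLM (𝕜 := ℂ) C u‖ ≤ ‖u‖ := by
  have key : ∀ x : N → ℂ, star x ⬝ᵥ (((1 : Matrix N N ℂ) - Cᴴ * C) *ᵥ x)
      = (((‖(WithLp.equiv 2 (N → ℂ)).symm x‖^2
        - ‖toEuclideanCLM (𝕜 := ℂ) C ((WithLp.equiv 2 (N → ℂ)).symm x)‖^2 : ℝ)) : ℂ) := by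
    intro x
    rw [sub_mulVec, dotProduct_sub, one_mulVec, ← mulVec_mulVec,
      dotProduct_mulVec, ← star_mulVec, dot_star_self_eq, dot_star_self_eq, toCLM_apply_symm]
    push_cast
    ring
  constructor
  · intro h u
    have h2 := h.dotProduct_mulVec_nonneg (WithLp.equiv 2 (N → ℂ) u)
    rw [key] at h2
    simp only [Equiv.symm_apply_apply] at h2
    rw [Complex.le_def] at h2
    simp only [Complex.zero_re, Complex.ofReal_re] at h2
    have := h2.1
    nlinarith [norm_nonneg (toEuclideanCLM (𝕜 := ℂ) C u), norm_nonneg u]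
  · intro h
    refine Matrix.PosSemidef.of_dotProduct_mulVec_nonneg ?_ ?_
    · exact IsHermitian.sub isHermitian_one (posSemidef_conjTranspose_mul_self C).1
    · intro x
      rw [key x, Complex.le_def]
      refine ⟨?_, by simp [← Complex.ofReal_pow]⟩
      simp only [Complex.zero_re, Complex.ofReal_re]
      have := h ((WithLp.equiv 2 (N → ℂ)).symm x)
      nlinarith [norm_nonneg (toEuclideanCLM (𝕜 := ℂ) C ((WithLp.equiv 2 (N → ℂ)).symm x)),
        norm_nonneg ((WithLp.equiv 2 (N → ℂ)).symm x)]

private lemma contraction_flip (C : Matrix N N ℂ)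
    (h : ((1 : Matrix N N ℂ) - Cᴴ * C).PosSemidef) :
    ((1 : Matrix N N ℂ) - C * Cᴴ).PosSemidef := by
  have hC : ‖toEuclideanCLM (𝕜 := ℂ) C‖ ≤ 1 := by
    apply ContinuousLinearMap.opNorm_le_bound _ zero_le_one
    intro u; rw [one_mul]; exact (psd_one_sub_iff C).mp h u
  have hCs : ∀ u : EuclideanSpace ℂ N, ‖toEuclideanCLM (𝕜 := ℂ) Cᴴ u‖ ≤ ‖u‖ := by
    intro u
    have hst : toEuclideanCLM (𝕜 := ℂ) Cᴴ = star (toEuclideanCLM (𝕜 := ℂ) C) := by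
      rw [← map_star]; rfl
    rw [hst]
    calc ‖star (toEuclideanCLM (𝕜 := ℂ) C) u‖ ≤ ‖star (toEuclideanCLM (𝕜 := ℂ) C)‖ * ‖u‖ :=
          ContinuousLinearMap.le_opNorm _ u
      _ ≤ 1 * ‖u‖ := by
          apply mul_le_mul_of_nonneg_right _ (norm_nonneg u)
          rw [ContinuousLinearMap.star_eq_adjoint]
          calc ‖ContinuousLinearMap.adjoint (toEuclideanCLM (𝕜 := ℂ) C)‖
              = ‖toEuclideanCLM (𝕜 := ℂ) C‖ := ContinuousLinearMap.adjoint.norm_map _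
            _ ≤ 1 := hC
      _ = ‖u‖ := one_mul _
  have := (psd_one_sub_iff Cᴴ).mpr hCs
  rwa [conjTranspose_conjTranspose] at this

private lemma diag_re_le_one {M : Matrix N N ℂ} (h : ((1 : Matrix N N ℂ) - M).PosSemidef) (i : N) :
    (M i i).re ≤ 1 := by
  have h2 := h.dotProduct_mulVec_nonneg (Pi.single i 1)
  have e : star (Pi.single i 1 : N → ℂ) ⬝ᵥ (((1 : Matrix N N ℂ) - M) *ᵥ Pi.single i 1)
      = 1 - M i i := by
    simp [dotProduct, Pi.single_apply, mulVec, Finset.mul_sum, apply_ite, one_apply, Matrix.sub_apply]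
  rw [e, Complex.le_def] at h2
  simp only [Complex.zero_re, Complex.sub_re, Complex.one_re] at h2
  linarith [h2.1]

private lemma row_abs_sq (G : Matrix N N ℂ) (i : N) :
    ∑ k, ‖G k i‖ ^ (2:ℝ) = ((Gᴴ * G) i i).re := by
  rw [mul_apply, Complex.re_sum]
  apply Finset.sum_congr rfl
  intro k _
  rw [show (2:ℝ) = ((2:ℕ):ℝ) by norm_num, Real.rpow_natCast]
  rw [conjTranspose_apply]
  have : star (G k i) * G k i = ((Complex.normSq (G k i) : ℝ) : ℂ) := by
    rw [Complex.normSq_eq_conj_mul_self]; rfl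
  rw [this, Complex.ofReal_re, Complex.normSq_eq_norm_sq]

private lemma col_abs_sq (G : Matrix N N ℂ) (k : N) :
    ∑ i, ‖G k i‖ ^ (2:ℝ) = ((G * Gᴴ) k k).re := by
  rw [mul_apply, Complex.re_sum]
  apply Finset.sum_congr rfl
  intro i _
  rw [show (2:ℝ) = ((2:ℕ):ℝ) by norm_num, Real.rpow_natCast]
  rw [conjTranspose_apply]
  have : G k i * star (G k i) = ((Complex.normSq (G k i) : ℝ) : ℂ) := by
    rw [← Complex.mul_conj]; rfl
  rw [this, Complex.ofReal_re, Complex.normSq_eq_norm_sq]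

private lemma cs_le_one (u v : N → ℝ) (hu : ∀ i, 0 ≤ u i) (hv : ∀ i, 0 ≤ v i)
    (hu2 : ∑ i, u i ^ (2:ℝ) ≤ 1) (hv2 : ∑ i, v i ^ (2:ℝ) ≤ 1) :
    ∑ i, u i * v i ≤ 1 := by
  have h2 : (2:ℝ).HolderConjugate 2 := by constructor <;> norm_num
  calc ∑ i, u i * v i
      ≤ (∑ i, u i ^ (2:ℝ)) ^ (1/(2:ℝ)) * (∑ i, v i ^ (2:ℝ)) ^ (1/(2:ℝ)) :=
        Real.inner_le_Lp_mul_Lq_of_nonneg _ h2 (fun i _ => hu i) (fun i _ => hv i)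
    _ ≤ 1 * 1 := by
        apply mul_le_mul
        · exact Real.rpow_le_one (Finset.sum_nonneg fun i _ => Real.rpow_nonneg (hu i) _) hu2 (by norm_num)
        · exact Real.rpow_le_one (Finset.sum_nonneg fun i _ => Real.rpow_nonneg (hv i) _) hv2 (by norm_num)
        · exact Real.rpow_nonneg (Finset.sum_nonneg fun i _ => Real.rpow_nonneg (hv i) _) _
        · norm_num
    _ = 1 := by norm_num

private lemma scalar_holder (α α' : ℝ) (hconj : α.HolderConjugate α') (x b : N → ℝ)
    (hx : ∀ i, 0 ≤ x i) (hb : ∀ j, 0 ≤ b j) (d : N → N → ℝ) (hd : ∀ k i, 0 ≤ d k i)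
    (hrow : ∀ i, ∑ k, d k i ≤ 1) (hcol : ∀ k, ∑ i, d k i ≤ 1) :
    ∑ k, ∑ i, d k i * (x i * b k) ≤ (∑ i, x i ^ α) ^ (1/α) * (∑ k, b k ^ α') ^ (1/α') := by
  have hα0 : α ≠ 0 := ne_of_gt (lt_trans one_pos hconj.lt)
  have hα'0 : α' ≠ 0 := ne_of_gt (lt_trans one_pos hconj.symm.lt)
  have step1 : ∑ k, ∑ i, d k i * (x i * b k)
      = ∑ q : N × N, (d q.1 q.2 ^ (1/α) * x q.2) * (d q.1 q.2 ^ (1/α') * b q.1) := by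
    rw [Fintype.sum_prod_type]
    apply Finset.sum_congr rfl; intro k _
    apply Finset.sum_congr rfl; intro i _
    have hsum : 1/α + 1/α' = 1 := by
      rw [one_div, one_div]; exact hconj.inv_add_inv_eq_one
    have : d k i ^ (1/α) * d k i ^ (1/α') = d k i := by
      rw [← Real.rpow_add' (hd k i) (by rw [hsum]; norm_num), hsum, Real.rpow_one]
    calc d k i * (x i * b k) = (d k i ^ (1/α) * d k i ^ (1/α')) * (x i * b k) := by rw [this]
      _ = (d k i ^ (1/α) * x i) * (d k i ^ (1/α') * b k) := by ring
  rw [step1]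
  have hf : ∀ q : N × N, 0 ≤ d q.1 q.2 ^ (1/α) * x q.2 :=
    fun q => mul_nonneg (Real.rpow_nonneg (hd _ _) _) (hx _)
  have hg : ∀ q : N × N, 0 ≤ d q.1 q.2 ^ (1/α') * b q.1 :=
    fun q => mul_nonneg (Real.rpow_nonneg (hd _ _) _) (hb _)
  calc ∑ q : N × N, (d q.1 q.2 ^ (1/α) * x q.2) * (d q.1 q.2 ^ (1/α') * b q.1)
      ≤ (∑ q : N × N, (d q.1 q.2 ^ (1/α) * x q.2) ^ α) ^ (1/α)
        * (∑ q : N × N, (d q.1 q.2 ^ (1/α') * b q.1) ^ α') ^ (1/α') :=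
        Real.inner_le_Lp_mul_Lq_of_nonneg _ hconj (fun q _ => hf q) (fun q _ => hg q)
    _ ≤ (∑ i, x i ^ α) ^ (1/α) * (∑ k, b k ^ α') ^ (1/α') := by
        apply mul_le_mul
        · apply Real.rpow_le_rpow (Finset.sum_nonneg fun q _ => Real.rpow_nonneg (hf q) _)
            _ (div_nonneg zero_le_one hconj.left_pos.le)
          have : ∀ q : N × N, (d q.1 q.2 ^ (1/α) * x q.2) ^ α = d q.1 q.2 * x q.2 ^ α := by
            intro q
            rw [Real.mul_rpow (Real.rpow_nonneg (hd _ _) _) (hx _), ← Real.rpow_mul (hd _ _),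
              one_div, inv_mul_cancel₀ hα0, Real.rpow_one]
          simp_rw [this]
          rw [Fintype.sum_prod_type]
          rw [Finset.sum_comm]
          calc ∑ i, ∑ k, d k i * x i ^ α = ∑ i, (∑ k, d k i) * x i ^ α := by
                simp_rw [Finset.sum_mul]
            _ ≤ ∑ i, 1 * x i ^ α := by
                apply Finset.sum_le_sum
                intro i _
                exact mul_le_mul_of_nonneg_right (hrow i) (Real.rpow_nonneg (hx i) _)
            _ = ∑ i, x i ^ α := by simp
        · apply Real.rpow_le_rpow (Finset.sum_nonneg fun q _ => Real.rpow_nonneg (hg q) _)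
            _ (div_nonneg zero_le_one hconj.symm.left_pos.le)
          have : ∀ q : N × N, (d q.1 q.2 ^ (1/α') * b q.1) ^ α' = d q.1 q.2 * b q.1 ^ α' := by
            intro q
            rw [Real.mul_rpow (Real.rpow_nonneg (hd _ _) _) (hb _), ← Real.rpow_mul (hd _ _),
              one_div, inv_mul_cancel₀ hα'0, Real.rpow_one]
          simp_rw [this]
          rw [Fintype.sum_prod_type]
          calc ∑ k, ∑ i, d k i * b k ^ α' = ∑ k, (∑ i, d k i) * b k ^ α' := by
                simp_rw [Finset.sum_mul]
            _ ≤ ∑ k, 1 * b k ^ α' := by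
                apply Finset.sum_le_sum
                intro k _
                exact mul_le_mul_of_nonneg_right (hcol k) (Real.rpow_nonneg (hb k) _)
            _ = ∑ k, b k ^ α' := by simp
        · exact Real.rpow_nonneg (Finset.sum_nonneg fun q _ => Real.rpow_nonneg (hg q) _) _
        · exact Real.rpow_nonneg (Finset.sum_nonneg fun i _ => Real.rpow_nonneg (hx i) _) _

private lemma hoelder_trace (α α' : ℝ) (hconj : α.HolderConjugate α')
    (P Q C : Matrix N N ℂ)
    (hP1 : Pᴴ * P = 1) (hP2 : P * Pᴴ = 1) (hQ1 : Qᴴ * Q = 1) (hQ2 : Q * Qᴴ = 1)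
    (hC1 : ((1 : Matrix N N ℂ) - Cᴴ * C).PosSemidef)
    (hC2 : ((1 : Matrix N N ℂ) - C * Cᴴ).PosSemidef)
    (x b : N → ℝ) (hx : ∀ i, 0 ≤ x i) (hb : ∀ i, 0 ≤ b i) :
    (trace (Cᴴ * (P * diagonal (fun i => (x i : ℂ)) * Pᴴ)
        * (Q * diagonal (fun i => (b i : ℂ)) * Qᴴ))).re
      ≤ (∑ i, x i ^ α) ^ (1/α) * (∑ j, b j ^ α') ^ (1/α') := by
  set Dx : Matrix N N ℂ := diagonal (fun i => (x i : ℂ)) with hDx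
  set Db : Matrix N N ℂ := diagonal (fun i => (b i : ℂ)) with hDb
  set G : Matrix N N ℂ := Qᴴ * Cᴴ * P with hG
  set R : Matrix N N ℂ := Pᴴ * Q with hR
  -- trace identity
  have hmat : Cᴴ * (P * Dx * Pᴴ) * (Q * Db * Qᴴ) = Q * (G * Dx * (R * Db)) * Qᴴ := by
    simp only [hG, hR, Matrix.mul_assoc]
    rw [← Matrix.mul_assoc Q Qᴴ, hQ2, Matrix.one_mul]
  have htr : (trace (Cᴴ * (P * Dx * Pᴴ) * (Q * Db * Qᴴ))) = trace (G * Dx * (R * Db)) := by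
    rw [hmat, trace_mul_cycle, ← Matrix.mul_assoc, hQ1, Matrix.one_mul]
  rw [htr]
  -- entrywise expansion
  have expand : trace (G * Dx * (R * Db)) = ∑ k, ∑ i, (G k i * (x i : ℂ)) * (R i k * (b k : ℂ)) := by
    have t1 : trace (G * Dx * (R * Db)) = ∑ k, ∑ j, (G * Dx) k j * (R * Db) j k := by
      rw [trace]
      apply Finset.sum_congr rfl; intro k _
      rw [diag_apply, mul_apply]
    rw [t1]
    apply Finset.sum_congr rfl; intro k _
    apply Finset.sum_congr rfl; intro j _
    rw [hDx, hDb, mul_diagonal, mul_diagonal]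
  rw [expand]
  -- bound re by abs
  have habs : (∑ k, ∑ i, (G k i * (x i : ℂ)) * (R i k * (b k : ℂ))).re
      ≤ ∑ k, ∑ i, (‖G k i‖ * ‖R i k‖) * (x i * b k) := by
    rw [Complex.re_sum]
    apply Finset.sum_le_sum
    intro k _
    rw [Complex.re_sum]
    apply Finset.sum_le_sum
    intro i _
    calc ((G k i * (x i : ℂ)) * (R i k * (b k : ℂ))).re
        ≤ ‖(G k i * (x i : ℂ)) * (R i k * (b k : ℂ))‖ := Complex.re_le_norm _
      _ = (‖G k i‖ * ‖R i k‖) * (x i * b k) := by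
          rw [norm_mul, norm_mul, norm_mul,
            Complex.norm_real, Complex.norm_real, Real.norm_eq_abs, Real.norm_eq_abs,
            abs_of_nonneg (hx i), abs_of_nonneg (hb k)]
          ring
  apply le_trans habs
  -- now the scalar core
  apply scalar_holder α α' hconj x b hx hb
    (fun k i => ‖G k i‖ * ‖R i k‖)
    (fun k i => mul_nonneg (norm_nonneg _) (norm_nonneg _))
  · -- rows: ∑ k, |G k i| * |R i k| ≤ 1
    intro i
    apply cs_le_one (fun k => ‖G k i‖) (fun k => ‖R i k‖)
      (fun k => norm_nonneg _) (fun k => norm_nonneg _)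
    · rw [row_abs_sq]
      apply diag_re_le_one
      have e1 : (1 : Matrix N N ℂ) - Gᴴ * G = Pᴴ * ((1 : Matrix N N ℂ) - C * Cᴴ) * P := by
        rw [Matrix.mul_sub, Matrix.sub_mul, Matrix.mul_one, hP1]
        congr 1
        rw [hG, conjTranspose_mul, conjTranspose_mul, conjTranspose_conjTranspose,
          conjTranspose_conjTranspose]
        simp only [Matrix.mul_assoc]
        rw [← Matrix.mul_assoc Q Qᴴ, hQ2, Matrix.one_mul]
      have : (Pᴴ * ((1 : Matrix N N ℂ) - C * Cᴴ) * P).PosSemidef := by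
        have := hC2.mul_mul_conjTranspose_same Pᴴ
        rwa [conjTranspose_conjTranspose] at this
      rw [e1]; exact this
    · -- ∑ k, |R i k|^2 = ((R * Rᴴ) i i).re = 1
      rw [col_abs_sq]
      have : R * Rᴴ = 1 := by
        rw [hR, conjTranspose_mul, conjTranspose_conjTranspose]
        simp only [Matrix.mul_assoc]
        rw [← Matrix.mul_assoc Q Qᴴ, hQ2, Matrix.one_mul, hP1]
      rw [this, one_apply_eq, Complex.one_re]
  · -- cols
    intro k
    apply cs_le_one (fun i => ‖G k i‖) (fun i => ‖R i k‖)
      (fun i => norm_nonneg _) (fun i => norm_nonneg _)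
    · rw [col_abs_sq]
      apply diag_re_le_one
      have e1 : (1 : Matrix N N ℂ) - G * Gᴴ = Qᴴ * ((1 : Matrix N N ℂ) - Cᴴ * C) * Q := by
        rw [Matrix.mul_sub, Matrix.sub_mul, Matrix.mul_one, hQ1]
        congr 1
        rw [hG, conjTranspose_mul, conjTranspose_mul, conjTranspose_conjTranspose,
          conjTranspose_conjTranspose]
        simp only [Matrix.mul_assoc]
        rw [← Matrix.mul_assoc P Pᴴ, hP2, Matrix.one_mul]
      have : (Qᴴ * ((1 : Matrix N N ℂ) - Cᴴ * C) * Q).PosSemidef := by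
        have := hC1.mul_mul_conjTranspose_same Qᴴ
        rwa [conjTranspose_conjTranspose] at this
      rw [e1]; exact this
    · rw [row_abs_sq]
      have : Rᴴ * R = 1 := by
        rw [hR, conjTranspose_mul, conjTranspose_conjTranspose]
        simp only [Matrix.mul_assoc]
        rw [← Matrix.mul_assoc P Pᴴ, hP2, Matrix.one_mul, hQ1]
      rw [this, one_apply_eq, Complex.one_re]

private lemma trace_conj_diag (U : Matrix N N ℂ) (hU : Uᴴ * U = 1) (d : N → ℂ) :
    trace (U * diagonal d * Uᴴ) = ∑ i, d i := by
  rw [trace_mul_cycle, hU, Matrix.one_mul, trace_diagonal]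

private lemma conj_diag_mul (U : Matrix N N ℂ) (hU : Uᴴ * U = 1) (a b : N → ℂ) :
    (U * diagonal a * Uᴴ) * (U * diagonal b * Uᴴ) = U * diagonal (fun i => a i * b i) * Uᴴ := by
  have : diagonal a * (Uᴴ * U) * diagonal b = diagonal (fun i => a i * b i) := by
    rw [hU, Matrix.mul_one, diagonal_mul_diagonal]
  calc (U * diagonal a * Uᴴ) * (U * diagonal b * Uᴴ)
      = U * (diagonal a * (Uᴴ * U) * diagonal b) * Uᴴ := by
        simp only [Matrix.mul_assoc]
    _ = U * diagonal (fun i => a i * b i) * Uᴴ := by rw [this]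

private lemma conj_diag_conjTranspose (U : Matrix N N ℂ) (d : N → ℝ) :
    (U * diagonal (fun i => ((d i : ℝ) : ℂ)) * Uᴴ)ᴴ
      = U * diagonal (fun i => ((d i : ℝ) : ℂ)) * Uᴴ := by
  rw [conjTranspose_mul, conjTranspose_mul, conjTranspose_conjTranspose, diagonal_conjTranspose]
  have : star (fun i => ((d i : ℝ) : ℂ)) = fun i => ((d i : ℝ) : ℂ) := by
    funext i; simp [Pi.star_apply, Complex.conj_ofReal]
  rw [this, Matrix.mul_assoc]

private lemma psd_conj_diag (U : Matrix N N ℂ) (d : N → ℝ) (hd : ∀ i, 0 ≤ d i) :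
    (U * diagonal (fun i => ((d i : ℝ) : ℂ)) * Uᴴ).PosSemidef := by
  apply Matrix.PosSemidef.mul_mul_conjTranspose_same
  rw [posSemidef_diagonal_iff]
  intro i
  rw [Complex.le_def]
  constructor
  · simpa using hd i
  · simp

-- axioms from previous parts

private lemma psd_sqrt_unique {S T A : Matrix N N ℂ} (hS : S.PosSemidef) (hT : T.PosSemidef)
    (h1 : S * S = A) (h2 : T * T = A) : S = T := by
  open scoped MatrixOrder in
  exact (CFC.sqrt_unique h1 hS.nonneg).symm.trans (CFC.sqrt_unique h2 hT.nonneg)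

private noncomputable def tnMat (M : Matrix N N ℂ) : Matrix N N ℂ :=
  ((Matrix.posSemidef_conjTranspose_mul_self M).isHermitian.eigenvectorUnitary : Matrix N N ℂ) *
    Matrix.diagonal (fun i => ((Real.sqrt
      ((Matrix.posSemidef_conjTranspose_mul_self M).isHermitian.eigenvalues i) : ℝ) : ℂ)) *
    (star ((Matrix.posSemidef_conjTranspose_mul_self M).isHermitian.eigenvectorUnitary :
      Matrix N N ℂ))

private lemma traceNorm_eq' (M : Matrix N N ℂ) : traceNorm M = (tnMat M).trace.re := rfl

private lemma tnMat_psd (M : Matrix N N ℂ) : (tnMat M).PosSemidef := by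
  unfold tnMat
  exact psd_conj_diag _ _ (fun i => Real.sqrt_nonneg _)

private lemma tnMat_sq (M : Matrix N N ℂ) : tnMat M * tnMat M = Mᴴ * M := by
  unfold tnMat
  generalize Matrix.posSemidef_conjTranspose_mul_self M = hH
  have hU : ((hH.isHermitian.eigenvectorUnitary : Matrix N N ℂ))ᴴ *
      (hH.isHermitian.eigenvectorUnitary : Matrix N N ℂ) = 1 :=
    mem_unitaryGroup_iff'.mp hH.isHermitian.eigenvectorUnitary.2
  have e := conj_diag_mul _ hU (fun i => ((Real.sqrt (hH.isHermitian.eigenvalues i) : ℝ) : ℂ))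
    (fun i => ((Real.sqrt (hH.isHermitian.eigenvalues i) : ℝ) : ℂ))
  have hsp : Mᴴ * M = (hH.isHermitian.eigenvectorUnitary : Matrix N N ℂ) *
      diagonal (fun i => ((hH.isHermitian.eigenvalues i : ℝ) : ℂ)) *
      (hH.isHermitian.eigenvectorUnitary : Matrix N N ℂ)ᴴ := hH.isHermitian.spectral_theorem
  refine e.trans (Eq.trans ?_ hsp.symm)
  congr 2
  congr 1
  funext i
  rw [← Complex.ofReal_mul, Real.mul_self_sqrt (hH.eigenvalues_nonneg i)]

private lemma exists_contraction' (M V : Matrix N N ℂ) (lam : N → ℝ) (hlam0 : ∀ i, 0 ≤ lam i)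
    (hV1 : Vᴴ * V = 1) (hV2 : V * Vᴴ = 1)
    (hMM : Mᴴ * M = V * diagonal (fun i => ((lam i : ℝ) : ℂ)) * Vᴴ) :
    ∃ C : Matrix N N ℂ, ((1 : Matrix N N ℂ) - Cᴴ * C).PosSemidef ∧
      ((1 : Matrix N N ℂ) - C * Cᴴ).PosSemidef ∧
      ((Cᴴ * M).trace).re = traceNorm M := by
  have hH := posSemidef_conjTranspose_mul_self M
  set g : N → ℝ := fun i => (Real.sqrt (lam i))⁻¹ with hg
  have key : ∀ a b : N → ℝ,
      (V * diagonal (fun i => ((a i : ℝ) : ℂ)) * Vᴴ) * (V * diagonal (fun i => ((b i : ℝ) : ℂ)) * Vᴴ)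
        = V * diagonal (fun i => ((a i * b i : ℝ) : ℂ)) * Vᴴ := by
    intro a b
    rw [conj_diag_mul V hV1]
    have : (fun i => ((a i :ℝ):ℂ) * ((b i :ℝ):ℂ)) = fun i => ((a i * b i : ℝ) : ℂ) := by
      funext i; push_cast; ring
    rw [this]
  have hsq_psd : (V * diagonal (fun i => ((Real.sqrt (lam i) : ℝ) : ℂ)) * Vᴴ).PosSemidef :=
    psd_conj_diag V _ (fun i => Real.sqrt_nonneg _)
  have hsq : V * diagonal (fun i => ((Real.sqrt (lam i) : ℝ) : ℂ)) * Vᴴ = tnMat M := by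
    apply psd_sqrt_unique hsq_psd (tnMat_psd M) _ (tnMat_sq M)
    rw [key, hMM]
    have : (fun i => ((Real.sqrt (lam i) * Real.sqrt (lam i) : ℝ) : ℂ))
        = fun i => ((lam i : ℝ) : ℂ) := by
      funext i; rw [Real.mul_self_sqrt (hlam0 i)]
    rw [this]
  set Tm : Matrix N N ℂ := V * diagonal (fun i => ((g i : ℝ) : ℂ)) * Vᴴ with hTm
  have hTmH : Tmᴴ = Tm := conj_diag_conjTranspose V g
  have hCH : (M * Tm)ᴴ = Tm * Mᴴ := by rw [conjTranspose_mul, hTmH]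
  have hCHM : (M * Tm)ᴴ * M = V * diagonal (fun i => ((g i * lam i : ℝ) : ℂ)) * Vᴴ := by
    rw [hCH, Matrix.mul_assoc, hMM, hTm, key]
  have hglam : ∀ i, g i * lam i = Real.sqrt (lam i) := by
    intro i
    rcases eq_or_lt_of_le (hlam0 i) with h | h
    · simp [hg, ← h]
    · simp only [hg]
      rw [inv_mul_eq_div, Real.div_sqrt]
  have hCC : (M * Tm)ᴴ * (M * Tm)
      = V * diagonal (fun i => (((g i * lam i) * g i : ℝ) : ℂ)) * Vᴴ := by
    calc (M * Tm)ᴴ * (M * Tm) = ((M * Tm)ᴴ * M) * Tm := (Matrix.mul_assoc _ _ _).symm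
      _ = _ := by rw [hCHM, hTm, key]
  have hone : (1 : Matrix N N ℂ) = V * diagonal (fun i => (((1:ℝ) : ℝ) : ℂ)) * Vᴴ := by
    have : diagonal (fun _ : N => (((1:ℝ):ℝ) : ℂ)) = 1 := by
      rw [show (fun _ : N => (((1:ℝ):ℝ):ℂ)) = fun _ : N => (1:ℂ) by funext i; norm_num, diagonal_one]
    rw [this, Matrix.mul_one, hV2]
  have hsub : (1 : Matrix N N ℂ) - (M * Tm)ᴴ * (M * Tm)
      = V * diagonal (fun i => ((1 - (g i * lam i) * g i : ℝ) : ℂ)) * Vᴴ := by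
    rw [hCC, hone, ← Matrix.sub_mul, ← Matrix.mul_sub, diagonal_sub]
    have : (fun i => ((((1:ℝ):ℝ) : ℂ)) - ((((g i * lam i) * g i : ℝ)) : ℂ))
        = fun i => ((1 - (g i * lam i) * g i : ℝ) : ℂ) := by
      funext i; push_cast; ring
    rw [this]
  have hle1 : ∀ i, 0 ≤ 1 - (g i * lam i) * g i := by
    intro i
    rw [hglam i, hg]
    rcases eq_or_lt_of_le (hlam0 i) with h | h
    · simp [← h]
    · rw [mul_inv_cancel₀ (ne_of_gt (Real.sqrt_pos.mpr h))]
      norm_num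
  have hpsd1 : ((1 : Matrix N N ℂ) - (M * Tm)ᴴ * (M * Tm)).PosSemidef := by
    rw [hsub]; exact psd_conj_diag V _ hle1
  refine ⟨M * Tm, hpsd1, contraction_flip _ hpsd1, ?_⟩
  have heq : (M * Tm)ᴴ * M = tnMat M := by
    rw [hCHM, ← hsq]
    have : (fun i => ((g i * lam i : ℝ) : ℂ)) = fun i => ((Real.sqrt (lam i) : ℝ) : ℂ) := by
      funext i; rw [hglam i]
    rw [this]
  rw [heq]
  rfl

private lemma rpow_sum_bound (x : N → ℝ) (hx : ∀ i, 0 ≤ x i) (α : ℝ) (hα : 1 < α) :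
    (∑ i, x i ^ α) ^ (1/α) ≤ ∑ i, x i := by
  have hα0 : α ≠ 0 := by linarith
  have hane : (1:ℝ) + (α - 1) ≠ 0 := by
    have : (1:ℝ) + (α - 1) = α := by ring
    rw [this]; exact hα0
  have hs : 0 ≤ ∑ i, x i := Finset.sum_nonneg fun i _ => hx i
  have h1 : ∑ i, x i ^ α ≤ (∑ i, x i) ^ α := by
    have hterm : ∀ i ∈ Finset.univ, x i ^ α ≤ x i * (∑ j, x j) ^ (α - 1) := by
      intro i _
      have e0 : x i ^ ((1:ℝ) + (α - 1)) = x i * x i ^ (α - 1) := by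
        rw [Real.rpow_add' (hx i) hane, Real.rpow_one]
      have e : x i ^ α = x i * x i ^ (α - 1) := by
        rw [← e0, show (1:ℝ) + (α - 1) = α by ring]
      rw [e]
      exact mul_le_mul_of_nonneg_left
        (Real.rpow_le_rpow (hx i) (Finset.single_le_sum (fun j _ => hx j) (Finset.mem_univ i))
          (by linarith)) (hx i)
    calc ∑ i, x i ^ α ≤ ∑ i, x i * (∑ j, x j) ^ (α - 1) := Finset.sum_le_sum hterm
      _ = (∑ i, x i) * (∑ j, x j) ^ (α - 1) := by rw [← Finset.sum_mul]
      _ = (∑ i, x i) ^ α := by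
          have e0 : (∑ i, x i) ^ ((1:ℝ) + (α - 1)) = (∑ i, x i) * (∑ i, x i) ^ (α - 1) := by
            rw [Real.rpow_add' hs hane, Real.rpow_one]
          rw [← e0, show (1:ℝ) + (α - 1) = α by ring]
  calc (∑ i, x i ^ α) ^ (1/α)
      ≤ ((∑ i, x i) ^ α) ^ (1/α) :=
        Real.rpow_le_rpow (Finset.sum_nonneg fun i _ => Real.rpow_nonneg (hx i) _) h1
          (div_nonneg zero_le_one (by linarith))
    _ = ∑ i, x i := by
        rw [← Real.rpow_mul hs, mul_one_div_cancel hα0, Real.rpow_one]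

end
end AuxStmt1

/-- If `0 ≤ X ≤ Y ≤ I`, `α > 1` and `‖X‖₁ = p`, then
`‖X Y^{α-1}‖₁ ≤ p (Tr Y^α)^{(α-1)/α}`. -/
theorem stmt_1 (n : ℕ) (hn : 1 ≤ n) (α : ℝ) (hα : 1 < α)
    (X Y : Matrix (Fin n) (Fin n) ℂ)
    (hX : X.PosSemidef) (hY : Y.PosSemidef)
    (hXY : (Y - X).PosSemidef) (hYI : ((1 : Matrix (Fin n) (Fin n) ℂ) - Y).PosSemidef)
    (p : ℝ) (hp : traceNorm X = p) :
    traceNorm (X * matRpow Y (α - 1)) ≤ p * (((matRpow Y α).trace).re) ^ ((α - 1) / α) := by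
  have hα0 : α ≠ 0 := by linarith
  have hα1 : α - 1 ≠ 0 := by intro h; apply hα.ne'; linarith
  set α' : ℝ := α / (α - 1) with hα'
  have hconj : α.HolderConjugate α' := Real.HolderConjugate.conjExponent hα
  -- spectral data for X
  set P : Matrix (Fin n) (Fin n) ℂ := (hX.1.eigenvectorUnitary : Matrix (Fin n) (Fin n) ℂ)
    with hPdef
  set x : Fin n → ℝ := hX.1.eigenvalues with hxdef
  have hx0 : ∀ i, 0 ≤ x i := fun i => hX.eigenvalues_nonneg i
  have hP1 : Pᴴ * P = 1 := mem_unitaryGroup_iff'.mp hX.1.eigenvectorUnitary.2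
  have hP2 : P * Pᴴ = 1 := mem_unitaryGroup_iff.mp hX.1.eigenvectorUnitary.2
  have hXspec : X = P * diagonal (fun i => ((x i : ℝ) : ℂ)) * Pᴴ := hX.1.spectral_theorem
  -- spectral data for Y
  set Q : Matrix (Fin n) (Fin n) ℂ := (hY.1.eigenvectorUnitary : Matrix (Fin n) (Fin n) ℂ)
    with hQdef
  set y : Fin n → ℝ := hY.1.eigenvalues with hydef
  have hy0 : ∀ i, 0 ≤ y i := fun i => hY.eigenvalues_nonneg i
  have hQ1 : Qᴴ * Q = 1 := mem_unitaryGroup_iff'.mp hY.1.eigenvectorUnitary.2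
  have hQ2 : Q * Qᴴ = 1 := mem_unitaryGroup_iff.mp hY.1.eigenvectorUnitary.2
  have hB : matRpow Y (α - 1) = Q * diagonal (fun i => ((y i ^ (α-1) : ℝ) : ℂ)) * Qᴴ := by
    rw [matRpow, matFun, dif_pos hY.1]
    rfl
  have hTrα : ((matRpow Y α).trace).re = ∑ i, y i ^ α := by
    rw [matRpow, matFun, dif_pos hY.1, show (star (hY.1.eigenvectorUnitary : Matrix (Fin n) (Fin n) ℂ)) = Qᴴ from rfl,
      trace_conj_diag Q hQ1, Complex.re_sum]
    simp
    rfl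
  -- traceNorm X = ∑ x
  have hXsqrt : X = tnMat X := by
    apply psd_sqrt_unique hX (tnMat_psd X) _ (tnMat_sq X)
    rw [hX.1]
  have htrX : traceNorm X = ∑ i, x i := by
    rw [traceNorm_eq', ← hXsqrt]
    have : X.trace = ∑ i, ((x i : ℝ) : ℂ) := by
      conv_lhs => rw [hXspec]
      rw [trace_conj_diag P hP1]
    rw [this, Complex.re_sum]
    simp
  -- the contraction
  set B : Matrix (Fin n) (Fin n) ℂ := matRpow Y (α - 1) with hBdef
  set M : Matrix (Fin n) (Fin n) ℂ := X * B with hMdef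
  have hH := Matrix.posSemidef_conjTranspose_mul_self M
  obtain ⟨C, hC1, hC2, hCtr⟩ := exists_contraction' M
    (hH.1.eigenvectorUnitary : Matrix (Fin n) (Fin n) ℂ) hH.1.eigenvalues
    (fun i => hH.eigenvalues_nonneg i)
    (mem_unitaryGroup_iff'.mp hH.1.eigenvectorUnitary.2)
    (mem_unitaryGroup_iff.mp hH.1.eigenvectorUnitary.2)
    hH.1.spectral_theorem
  -- main chain
  have hmain : traceNorm M ≤ (∑ i, x i ^ α) ^ (1/α) * (∑ j, (y j ^ (α-1)) ^ α') ^ (1/α') := by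
    rw [← hCtr]
    have : Cᴴ * M = Cᴴ * (P * diagonal (fun i => ((x i : ℝ) : ℂ)) * Pᴴ)
        * (Q * diagonal (fun i => ((y i ^ (α-1) : ℝ) : ℂ)) * Qᴴ) := by
      rw [hMdef, hB, ← Matrix.mul_assoc, ← hXspec]
    rw [this]
    exact hoelder_trace α α' hconj P Q C hP1 hP2 hQ1 hQ2 hC1 hC2 x (fun i => y i ^ (α-1))
      hx0 (fun i => Real.rpow_nonneg (hy0 i) _)
  -- rewrite the second factor
  have hby : ∀ j, (y j ^ (α-1)) ^ α' = y j ^ α := by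
    intro j
    rw [← Real.rpow_mul (hy0 j) (α-1) α']
    congr 1
    rw [hα']
    field_simp
  have hexp : (1:ℝ)/α' = (α-1)/α := by
    rw [hα', one_div_div]
  have hfin : traceNorm M ≤ (∑ i, x i ^ α) ^ (1/α) * (∑ j, y j ^ α) ^ ((α-1)/α) := by
    rw [← hexp]
    calc traceNorm M ≤ (∑ i, x i ^ α) ^ (1/α) * (∑ j, (y j ^ (α-1)) ^ α') ^ (1/α') := hmain
      _ = (∑ i, x i ^ α) ^ (1/α) * (∑ j, y j ^ α) ^ (1/α') := by
          congr 2
          exact Finset.sum_congr rfl fun j _ => hby j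
  have hpfact : (∑ i, x i ^ α) ^ (1/α) ≤ p := by
    rw [← hp, htrX]
    exact rpow_sum_bound x hx0 α hα
  calc traceNorm M ≤ (∑ i, x i ^ α) ^ (1/α) * (∑ j, y j ^ α) ^ ((α-1)/α) := hfin
    _ ≤ p * (∑ j, y j ^ α) ^ ((α-1)/α) := by
        apply mul_le_mul_of_nonneg_right hpfact
        exact Real.rpow_nonneg (Finset.sum_nonneg fun j _ => Real.rpow_nonneg (hy0 j) _) _
    _ = p * (((matRpow Y α).trace).re) ^ ((α-1)/α) := by rw [hTrα]
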